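/- Let A, B : ℝ → ℝ be C² functions such that for every c ∈ ℝ either (A'(c) = 0 and B'(c) = 0) or B'(c)² < 2·A'(c). Define F : ℝ² → ℝ² by F(c,t) := ((A(c)/2)·t² + B(c)·t + c, t). Then F is C², injective, and Ω := F(ℝ²) is an open subset of ℝ². -/

import Mathlib

open ContinuousLinearMap

private lemma aux_open {f : ℝ × ℝ → ℝ × ℝ} {p : ℝ × ℝ} {D : ℝ × ℝ →L[ℝ] ℝ × ℝ} {d m : ℝ}
    (hd : d ≠ 0) (hDF : HasStrictFDerivAt f D p)
    (hDapp : ∀ z : ℝ × ℝ, D z = (d * z.1 + m * z.2, z.2)) :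
    Set.range f ∈ nhds (f p) := by
  set G : ℝ × ℝ →L[ℝ] ℝ × ℝ :=
    ((d⁻¹ • fst ℝ ℝ ℝ) + (-(m / d)) • snd ℝ ℝ ℝ).prod (snd ℝ ℝ ℝ) with hGdef
  have hGapp : ∀ z : ℝ × ℝ, G z = (d⁻¹ * z.1 - m / d * z.2, z.2) := by
    rintro ⟨u, v⟩
    simp only [hGdef, ContinuousLinearMap.prod_apply, ContinuousLinearMap.add_apply,
      ContinuousLinearMap.smul_apply, ContinuousLinearMap.coe_fst', ContinuousLinearMap.coe_snd',
      smul_eq_mul]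
    rw [Prod.mk.injEq]
    exact ⟨by ring, rfl⟩
  have h1 : Function.LeftInverse G D := by
    rintro ⟨u, v⟩
    rw [hDapp, hGapp]
    refine Prod.ext ?_ rfl
    simp only
    field_simp
    ring
  have h2 : Function.RightInverse G D := by
    rintro ⟨u, v⟩
    rw [hGapp, hDapp]
    refine Prod.ext ?_ rfl
    simp only
    field_simp
    ring
  set e : (ℝ × ℝ) ≃L[ℝ] (ℝ × ℝ) := ContinuousLinearEquiv.equivOfInverse D G h1 h2 with hedef
  have hDF' : HasStrictFDerivAt f (e : (ℝ × ℝ) →L[ℝ] (ℝ × ℝ)) p := hDF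
  rw [← hDF'.map_nhds_eq_of_equiv]
  exact Filter.mem_map.2 (Filter.univ_mem' fun a => Set.mem_range_self a)

theorem stmt10 (A B : ℝ → ℝ) (hA : ContDiff ℝ 2 A) (hB : ContDiff ℝ 2 B)
    (hcond : ∀ c : ℝ, (deriv A c = 0 ∧ deriv B c = 0) ∨ (deriv B c) ^ 2 < 2 * deriv A c)
    (F : ℝ × ℝ → ℝ × ℝ)
    (hF : ∀ c t : ℝ, F (c, t) = (A c / 2 * t ^ 2 + B c * t + c, t)) :
    ContDiff ℝ 2 F ∧ Function.Injective F ∧ IsOpen (Set.range F) := by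
  have hFeq : F = fun p : ℝ × ℝ => (A p.1 / 2 * p.2 ^ 2 + B p.1 * p.2 + p.1, p.2) := by
    funext p; obtain ⟨c, t⟩ := p; exact hF c t
  subst hFeq
  -- positivity of the c-derivative
  have hpos : ∀ c t : ℝ, 0 < deriv A c / 2 * t ^ 2 + deriv B c * t + 1 := by
    intro c t
    rcases hcond c with ⟨h1, h2⟩ | h
    · simp [h1, h2]
    · have hA0 : 0 < deriv A c := by nlinarith [sq_nonneg (deriv B c)]
      nlinarith [sq_nonneg (deriv A c * t + deriv B c)]
  have hdiffA : Differentiable ℝ A := hA.differentiable two_ne_zero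
  have hdiffB : Differentiable ℝ B := hB.differentiable two_ne_zero
  -- the derivative of c ↦ x(c,t)
  have hgd : ∀ t c : ℝ, HasDerivAt (fun c => A c / 2 * t ^ 2 + B c * t + c)
      (deriv A c / 2 * t ^ 2 + deriv B c * t + 1) c := by
    intro t c
    exact ((((hdiffA c).hasDerivAt.div_const 2).mul_const (t ^ 2)).add
      ((hdiffB c).hasDerivAt.mul_const t)).add (hasDerivAt_id c)
  have hmono : ∀ t : ℝ, StrictMono (fun c => A c / 2 * t ^ 2 + B c * t + c) := by
    intro t
    apply strictMono_of_deriv_pos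
    intro c
    rw [(hgd t c).deriv]
    exact hpos c t
  refine ⟨?_, ?_, ?_⟩
  · exact (((((hA.comp contDiff_fst).div_const 2).mul (contDiff_snd.pow 2)).add
      ((hB.comp contDiff_fst).mul contDiff_snd)).add contDiff_fst).prodMk contDiff_snd
  · rintro ⟨c₁, t₁⟩ ⟨c₂, t₂⟩ h
    have ht : t₁ = t₂ := congrArg Prod.snd h
    subst ht
    have hx : A c₁ / 2 * t₁ ^ 2 + B c₁ * t₁ + c₁ = A c₂ / 2 * t₁ ^ 2 + B c₂ * t₁ + c₂ :=
      congrArg Prod.fst h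
    exact Prod.ext ((hmono t₁).injective hx) rfl
  · rw [isOpen_iff_mem_nhds]
    rintro y ⟨⟨c, t⟩, rfl⟩
    set d : ℝ := deriv A c / 2 * t ^ 2 + deriv B c * t + 1 with hd
    set m : ℝ := A c * t + B c with hm
    have hd0 : 0 < d := hpos c t
    have hAc : HasStrictFDerivAt (fun q : ℝ × ℝ => A q.1)
        (deriv A c • fst ℝ ℝ ℝ) (c, t) :=
      (hA.hasStrictDerivAt two_ne_zero).comp_hasStrictFDerivAt (c, t) hasStrictFDerivAt_fst
    have hBc : HasStrictFDerivAt (fun q : ℝ × ℝ => B q.1)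
        (deriv B c • fst ℝ ℝ ℝ) (c, t) :=
      (hB.hasStrictDerivAt two_ne_zero).comp_hasStrictFDerivAt (c, t) hasStrictFDerivAt_fst
    have hsq : HasStrictFDerivAt (fun q : ℝ × ℝ => q.2 ^ 2)
        ((2 * t ^ 1) • snd ℝ ℝ ℝ) (c, t) :=
      (hasStrictDerivAt_pow 2 t).comp_hasStrictFDerivAt_of_eq (c, t) hasStrictFDerivAt_snd rfl
    have hDF0 := ((((hAc.mul_const (2⁻¹ : ℝ)).mul hsq).add
      (hBc.mul hasStrictFDerivAt_snd)).add hasStrictFDerivAt_fst).prodMk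
      (hasStrictFDerivAt_snd (p := ((c, t) : ℝ × ℝ)))
    have hDF : HasStrictFDerivAt
        (fun p : ℝ × ℝ => (A p.1 / 2 * p.2 ^ 2 + B p.1 * p.2 + p.1, p.2)) _ (c, t) := hDF0
    refine aux_open (m := m) (ne_of_gt hd0) hDF ?_
    rintro ⟨u, v⟩
    simp only [ContinuousLinearMap.prod_apply, ContinuousLinearMap.add_apply,
      ContinuousLinearMap.smul_apply, ContinuousLinearMap.coe_fst', ContinuousLinearMap.coe_snd',
      smul_eq_mul, ContinuousLinearMap.coe_smul', Pi.smul_apply]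
    refine Prod.ext ?_ rfl
    simp only [hd, hm]
    ring
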